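/- Let A be a commutative ring, f_0, ..., f_n a Koszul-regular sequence in A, and d_0, ..., d_n positive integers. Set S = A[t, x_0, ..., x_n] and B = S/(f_0 - x_0·t^{d_0}, ..., f_n - x_n·t^{d_n}). Then t is a nonzerodivisor in B, and B/(t) ≅ (A/(f_0, ..., f_n))[x_0, ..., x_n]. -/

import Mathlib

set_option maxHeartbeats 1000000
set_option synthInstance.maxHeartbeats 400000

open MvPolynomial

/-- A sequence `f 0, ..., f (m-1)` in a commutative ring `R` is *Koszul-regular* if the
Koszul complex `K_•(f; R)` has vanishing homology in all positive degrees. -/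
def IsKoszulRegular {R : Type*} [CommRing R] {m : ℕ} (f : Fin m → R) : Prop :=
  ∀ p : ℕ, 0 < p → ∀ x ∈ ⋀[R]^p (Fin m → R),
    CliffordAlgebra.contractLeft ((Pi.basisFun R (Fin m)).constr R f) x = 0 →
      ∃ y ∈ ⋀[R]^(p + 1) (Fin m → R),
        CliffordAlgebra.contractLeft ((Pi.basisFun R (Fin m)).constr R f) y = x

/-- The ideal of `S = A[t, x_0, ..., x_n]` generated by the elements
`f_i - x_i·t^{d_i}`, where `S` is realized as `MvPolynomial (Option (Fin (n+1))) A` with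
`X none = t` and `X (some i) = x_i`. -/
noncomputable def weightedReesIdeal {A : Type*} [CommRing A] {n : ℕ} (f : Fin (n + 1) → A)
    (d : Fin (n + 1) → ℕ) : Ideal (MvPolynomial (Option (Fin (n + 1))) A) :=
  Ideal.span (Set.range fun i : Fin (n + 1) =>
    (C (f i) - X (Option.some i) * X Option.none ^ d i :
      MvPolynomial (Option (Fin (n + 1))) A))

/-- `B = S/(f_0 - x_0 t^{d_0}, ..., f_n - x_n t^{d_n})`. -/
abbrev weightedReesQuotient {A : Type*} [CommRing A] {n : ℕ} (f : Fin (n + 1) → A)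
    (d : Fin (n + 1) → ℕ) : Type _ :=
  MvPolynomial (Option (Fin (n + 1))) A ⧸ weightedReesIdeal f d

section Infra
variable {A : Type*} [CommRing A] {σ : Type*}

lemma ev_eq (p : MvPolynomial (Option σ) A) :
    aeval (fun o : Option σ => (o.elim 0 X : MvPolynomial σ A)) p
      = Polynomial.eval 0 (optionEquivLeft A σ p) := by
  have h : ((aeval (fun o : Option σ => (o.elim 0 X : MvPolynomial σ A)) :
        MvPolynomial (Option σ) A →ₐ[A] MvPolynomial σ A) :
        MvPolynomial (Option σ) A →+* MvPolynomial σ A)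
      = (Polynomial.evalRingHom (0 : MvPolynomial σ A)).comp
          ((optionEquivLeft A σ : MvPolynomial (Option σ) A ≃ₐ[A]
            Polynomial (MvPolynomial σ A)) :
            MvPolynomial (Option σ) A →+* Polynomial (MvPolynomial σ A)) := by
    apply MvPolynomial.ringHom_ext
    · intro a
      simp [optionEquivLeft_apply]
    · intro o
      cases o with
      | none => simp [optionEquivLeft_X_none]
      | some i => simp [optionEquivLeft_X_some]
  exact RingHom.congr_fun h p

lemma ev_zero_iff (p : MvPolynomial (Option σ) A) :
    aeval (fun o : Option σ => (o.elim 0 X : MvPolynomial σ A)) p = 0 ↔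
      X Option.none ∣ p := by
  rw [ev_eq, ← Polynomial.coeff_zero_eq_eval_zero, ← Polynomial.X_dvd_iff]
  constructor
  · intro h
    have h2 : (optionEquivLeft A σ).symm Polynomial.X ∣ (optionEquivLeft A σ).symm
        (optionEquivLeft A σ p) := map_dvd (optionEquivLeft A σ).symm h
    rwa [AlgEquiv.symm_apply_apply, ← optionEquivLeft_X_none (R := A) (S₁ := σ),
      AlgEquiv.symm_apply_apply] at h2
  · intro h
    have h2 := map_dvd (optionEquivLeft A σ) h
    rwa [optionEquivLeft_X_none] at h2

lemma X_none_cancel (u : MvPolynomial (Option σ) A)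
    (h : X Option.none * u = 0) : u = 0 := by
  have h2 : Polynomial.X * optionEquivLeft A σ u = 0 := by
    rw [← optionEquivLeft_X_none (R := A) (S₁ := σ), ← map_mul, h, map_zero]
  have h3 : optionEquivLeft A σ u = 0 :=
    (mem_nonZeroDivisors_iff.mp Polynomial.monic_X.mem_nonZeroDivisors).2 _
      (by rw [mul_comm]; exact h2)
  have := congrArg (optionEquivLeft A σ).symm h3
  rwa [AlgEquiv.symm_apply_apply, map_zero] at this

end Infra

open ExteriorAlgebra in
lemma koszul_syzygy {R : Type*} [CommRing R] {m : ℕ} {f : Fin m → R}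
    (hf : IsKoszulRegular f) (c : Fin m → R) (hc : ∑ i, c i * f i = 0) :
    ∃ a : Fin m → Fin m → R, (∀ i, a i i = 0) ∧ (∀ i j, a i j = - a j i) ∧
      ∀ i, c i = ∑ j, a i j * f j := by
  set D := (Pi.basisFun R (Fin m)).constr R f with hDdef
  have hD : ∀ v : Fin m → R, D v = ∑ i, v i * f i := by
    intro v
    rw [hDdef, Module.Basis.constr_apply_fintype]
    simp [smul_eq_mul]
  have hx : (ι R (c : Fin m → R)) ∈ ⋀[R]^1 (Fin m → R) := by
    have h1 : ⋀[R]^1 (Fin m → R) = LinearMap.range (ι R (M := Fin m → R)) := pow_one _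
    rw [h1]
    exact LinearMap.mem_range_self _ _
  have hc' : CliffordAlgebra.contractLeft D (ι R c) = 0 := by
    rw [CliffordAlgebra.contractLeft_ι, hD, hc, map_zero]
  obtain ⟨y, hy2, hyc⟩ := hf 1 one_pos _ hx hc'
  -- now analyze y ∈ ⋀^2
  have key : ∀ y ∈ ⋀[R]^2 (Fin m → R),
      ∃ a : Fin m → Fin m → R, (∀ i, a i i = 0) ∧ (∀ i j, a i j = - a j i) ∧
        CliffordAlgebra.contractLeft D y = ι R (fun i => ∑ j, a i j * f j) := by
    intro y hy
    rw [← ιMulti_span_fixedDegree] at hy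
    induction hy using Submodule.span_induction with
    | mem z hz =>
      obtain ⟨v, rfl⟩ := hz
      refine ⟨fun i j => v 0 j * v 1 i - v 1 j * v 0 i, by intro i; ring,
        by intro i j; ring, ?_⟩
      have hιM : ιMulti R 2 v = ι R (v 0) * ι R (v 1) := by
        rw [ιMulti_apply]
        simp [List.ofFn_succ]
      rw [hιM, CliffordAlgebra.contractLeft_ι_mul, CliffordAlgebra.contractLeft_ι]
      have : ι R (v 0) * algebraMap R _ (D (v 1)) = D (v 1) • ι R (v 0) := by
        rw [← Algebra.commutes, ← Algebra.smul_def]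
      rw [this, ← map_smul, ← map_smul, ← map_sub]
      congr 1
      funext i
      simp only [Pi.sub_apply, Pi.smul_apply, smul_eq_mul, hD]
      rw [Finset.sum_mul, Finset.sum_mul, ← Finset.sum_sub_distrib]
      exact Finset.sum_congr rfl fun j _ => by ring
    | zero =>
      refine ⟨0, by simp, by simp, ?_⟩
      rw [map_zero]
      have : (fun i : Fin m => ∑ j, (0 : Fin m → Fin m → R) i j * f j) = 0 := by
        funext i; simp
      rw [this, map_zero]
    | add u w hu hw ihu ihw =>
      obtain ⟨a, ha0, ha1, ha2⟩ := ihu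
      obtain ⟨b, hb0, hb1, hb2⟩ := ihw
      refine ⟨a + b, by simp [ha0, hb0], ?_, ?_⟩
      · intro i j; simp only [Pi.add_apply]; rw [ha1 i j, hb1 i j]; ring
      · rw [map_add, ha2, hb2, ← map_add]
        congr 1
        funext i
        simp [add_mul, Finset.sum_add_distrib]
    | smul r u hu ihu =>
      obtain ⟨a, ha0, ha1, ha2⟩ := ihu
      refine ⟨r • a, by simp [ha0], ?_, ?_⟩
      · intro i j
        simp only [Pi.smul_apply, smul_eq_mul]
        rw [ha1 i j]; ring
      · rw [map_smul, ha2, ← map_smul]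
        congr 1
        funext i
        simp [Finset.mul_sum, mul_assoc]
  obtain ⟨a, ha0, ha1, ha2⟩ := key y hy2
  refine ⟨a, ha0, ha1, fun i => ?_⟩
  have := hyc.symm.trans ha2
  have h := (ExteriorAlgebra.ι_inj R c _).mp this
  exact congrFun h i


lemma syz_poly {A : Type*} [CommRing A] {m : ℕ} {f : Fin m → A}
    (hf : ∀ c : Fin m → A, ∑ i, c i * f i = 0 →
      ∃ a : Fin m → Fin m → A, (∀ i, a i i = 0) ∧ (∀ i j, a i j = - a j i) ∧
        ∀ i, c i = ∑ j, a i j * f j)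
    {σ : Type*} (c : Fin m → MvPolynomial σ A)
    (hc : ∑ i, c i * C (f i) = 0) :
    ∃ a : Fin m → Fin m → MvPolynomial σ A, (∀ i, a i i = 0) ∧ (∀ i j, a i j = - a j i) ∧
      ∀ i, c i = ∑ j, a i j * C (f j) := by
  classical
  have H : ∀ μ : σ →₀ ℕ,
      ∃ a : Fin m → Fin m → A, (∀ i, a i i = 0) ∧ (∀ i j, a i j = - a j i) ∧
        ∀ i, coeff μ (c i) = ∑ j, a i j * f j := by
    intro μ
    apply hf
    calc ∑ i, coeff μ (c i) * f i
        = ∑ i, coeff μ (c i * C (f i)) := Finset.sum_congr rfl fun i _ => by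
          rw [mul_comm (c i) (C (f i)), coeff_C_mul, mul_comm]
      _ = coeff μ (∑ i, c i * C (f i)) := (coeff_sum _ _ _).symm
      _ = 0 := by rw [hc, coeff_zero]
  choose aμ h0 h1 h2 using H
  set T : Finset (σ →₀ ℕ) := Finset.univ.biUnion (fun i : Fin m => (c i).support) with hT
  refine ⟨fun i j => ∑ μ ∈ T, monomial μ (aμ μ i j), ?_, ?_, ?_⟩
  · intro i; simp [h0]
  · intro i j
    rw [← Finset.sum_neg_distrib]
    exact Finset.sum_congr rfl fun μ _ => by rw [h1 μ i j, map_neg]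
  · intro i
    have hsub : (c i).support ⊆ T := fun μ hμ =>
      Finset.mem_biUnion.mpr ⟨i, Finset.mem_univ i, hμ⟩
    calc c i = ∑ μ ∈ T, monomial μ (coeff μ (c i)) :=
          (c i).as_sum.trans (Finset.sum_subset hsub (fun μ _ hμ => by
            rw [MvPolynomial.notMem_support_iff.mp hμ, map_zero]))
      _ = ∑ μ ∈ T, ∑ j, monomial μ (aμ μ i j * f j) := Finset.sum_congr rfl fun μ _ => by
          rw [h2, map_sum]
      _ = ∑ j, ∑ μ ∈ T, monomial μ (aμ μ i j * f j) := Finset.sum_comm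
      _ = ∑ j, (∑ μ ∈ T, monomial μ (aμ μ i j)) * C (f j) := by
          refine Finset.sum_congr rfl fun j _ => ?_
          rw [Finset.sum_mul]
          exact Finset.sum_congr rfl fun μ _ => by rw [mul_comm _ (C (f j)), C_mul_monomial,
            mul_comm (f j)]



/-- Let `f_0, ..., f_n` be a Koszul-regular sequence in `A` and
`d_0, ..., d_n` positive integers.  In `B = A[t, x]/(f_i - x_i t^{d_i})`, the image of `t`
is a nonzerodivisor, and `B/(t) ≅ (A/(f_0, ..., f_n))[x_0, ..., x_n]` by a ring
isomorphism compatible with `A` and sending `x_i` to `x_i`. -/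
theorem t_regular_and_quotient_iso {A : Type*} [CommRing A] {n : ℕ}
    (f : Fin (n + 1) → A) (d : Fin (n + 1) → ℕ) (hd : ∀ i, 0 < d i)
    (hf : IsKoszulRegular f) :
    (∀ b : weightedReesQuotient f d,
      Ideal.Quotient.mk (weightedReesIdeal f d) (X Option.none) * b = 0 → b = 0) ∧
    ∃ e : (weightedReesQuotient f d ⧸
          Ideal.span {Ideal.Quotient.mk (weightedReesIdeal f d) (X Option.none)}) ≃+*
        MvPolynomial (Fin (n + 1)) (A ⧸ Ideal.span (Set.range f)),
      (∀ a : A,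
        e (Ideal.Quotient.mk _
            (Ideal.Quotient.mk (weightedReesIdeal f d) (C a))) =
          C (Ideal.Quotient.mk (Ideal.span (Set.range f)) a)) ∧
      ∀ i : Fin (n + 1),
        e (Ideal.Quotient.mk _
            (Ideal.Quotient.mk (weightedReesIdeal f d) (X (Option.some i)))) = X i := by
  classical
  set S := MvPolynomial (Option (Fin (n + 1))) A with hS
  set q : Fin (n + 1) → S := fun i =>
    C (f i) - X (Option.some i) * X Option.none ^ d i with hq
  set I : Ideal S := weightedReesIdeal f d with hI
  have hIq : I = Ideal.span (Set.range q) := rfl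
  set ev : S →ₐ[A] MvPolynomial (Fin (n + 1)) A :=
    aeval (fun o : Option (Fin (n + 1)) => (o.elim 0 X : MvPolynomial (Fin (n + 1)) A))
    with hev
  have hev_none : ev (X Option.none) = 0 := by rw [hev, aeval_X]; rfl
  have hev_some : ∀ i, ev (X (Option.some i)) = X i := fun i => by rw [hev, aeval_X]; rfl
  have hev_C : ∀ a : A, ev (C a) = C a := fun a => by
    rw [hev]; exact aeval_C _ a
  have hevq : ∀ i, ev (q i) = C (f i) := by
    intro i
    rw [hq]
    simp only [map_sub, map_mul, map_pow, hev_none, hev_some, hev_C]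
    rw [zero_pow (hd i).ne', mul_zero, sub_zero]
  have hev_rename : ∀ p : MvPolynomial (Fin (n + 1)) A, ev (rename Option.some p) = p := by
    intro p
    rw [hev, aeval_rename]
    have : ((fun o : Option (Fin (n + 1)) =>
        (o.elim 0 X : MvPolynomial (Fin (n + 1)) A)) ∘ Option.some) = X := rfl
    rw [this]
    exact aeval_X_left_apply p
  -- the syzygy property over the polynomial ring
  have hsyz := fun (c : Fin (n + 1) → MvPolynomial (Fin (n + 1)) A) hc =>
    syz_poly (fun c' hc' => koszul_syzygy hf c' hc') c hc
  constructor
  · -- t is a nonzerodivisor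
    intro b hb
    obtain ⟨g, rfl⟩ := Ideal.Quotient.mk_surjective b
    rw [← map_mul, Ideal.Quotient.eq_zero_iff_mem] at hb
    rw [Ideal.Quotient.eq_zero_iff_mem]
    have hb' : X Option.none * g ∈ Ideal.span (Set.range q) := hb
    rw [Ideal.mem_span_range_iff_exists_fun] at hb'
    obtain ⟨h, hh⟩ := hb'
    have hev0 : ∑ i, ev (h i) * C (f i) = 0 := by
      have h1 := congrArg ev hh
      rw [map_mul, hev_none, zero_mul, map_sum] at h1
      rw [← h1]
      exact Finset.sum_congr rfl fun i _ => by rw [map_mul, hevq]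
    obtain ⟨a, ha0, ha1, ha2⟩ := hsyz _ hev0
    set h' : Fin (n + 1) → S := fun i => h i - ∑ j, rename Option.some (a i j) * q j
      with hh'
    have hsum : ∑ i, h' i * q i = X Option.none * g := by
      rw [hh']
      simp only [sub_mul, Finset.sum_sub_distrib, hh]
      have hz : ∑ i, (∑ j, rename Option.some (a i j) * q j) * q i = 0 := by
        have : ∑ i, (∑ j, rename Option.some (a i j) * q j) * q i
            = ∑ p ∈ Finset.univ ×ˢ Finset.univ,
              rename Option.some (a p.1 p.2) * q p.2 * q p.1 := by
          rw [Finset.sum_product]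
          exact Finset.sum_congr rfl fun i _ => by rw [Finset.sum_mul]
        rw [this]
        refine Finset.sum_ninvolution (fun p => (p.2, p.1)) ?_ ?_ (fun _ => Finset.mem_univ _)
          (fun p => rfl)
        · intro p
          have : a p.1 p.2 = - a p.2 p.1 := ha1 p.1 p.2
          rw [this, map_neg]
          ring
        · intro p hp hpe
          apply hp
          have h21 : p.2 = p.1 := congrArg Prod.fst hpe
          rw [h21, ha0, map_zero, zero_mul, zero_mul]
      rw [hz, sub_zero]
    have hev_h' : ∀ i, ev (h' i) = 0 := by
      intro i
      rw [hh']
      simp only [map_sub, map_sum, map_mul, hevq, hev_rename]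
      rw [← ha2 i, sub_self]
    have hdvd : ∀ i, ∃ k : S, h' i = X Option.none * k := by
      intro i
      obtain ⟨k, hk⟩ := (ev_zero_iff (h' i)).mp (hev_h' i)
      exact ⟨k, hk⟩
    choose k hk using hdvd
    have : X Option.none * g = X Option.none * ∑ i, k i * q i := by
      rw [← hsum, Finset.mul_sum]
      exact Finset.sum_congr rfl fun i _ => by rw [hk i, mul_assoc]
    have hg : g = ∑ i, k i * q i := by
      have h0 : X Option.none * (g - ∑ i, k i * q i) = 0 := by
        rw [mul_sub, this, sub_self]
      exact sub_eq_zero.mp (X_none_cancel _ h0)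
    show g ∈ Ideal.span (Set.range q)
    rw [hg]
    exact Ideal.sum_mem _ fun i _ => Ideal.mul_mem_left _ _
      (Ideal.subset_span ⟨i, rfl⟩)
  · -- the isomorphism
    set J : Ideal A := Ideal.span (Set.range f) with hJ
    set Φ : S →+* MvPolynomial (Fin (n + 1)) (A ⧸ J) :=
      ((MvPolynomial.map (Ideal.Quotient.mk J) :
          MvPolynomial (Fin (n + 1)) A →+* MvPolynomial (Fin (n + 1)) (A ⧸ J))).comp
        (ev : S →+* MvPolynomial (Fin (n + 1)) A) with hΦ
    have hΦ_apply : ∀ p : S, Φ p = MvPolynomial.map (Ideal.Quotient.mk J) (ev p) :=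
      fun p => rfl
    have hΦsurj : Function.Surjective Φ := by
      intro z
      obtain ⟨w, hw⟩ := MvPolynomial.map_surjective _ Ideal.Quotient.mk_surjective z
      exact ⟨rename Option.some w, by rw [hΦ_apply, hev_rename, hw]⟩
    have hflift : ∀ i, (Ideal.Quotient.mk J) (f i) = 0 := fun i =>
      Ideal.Quotient.eq_zero_iff_mem.mpr (Ideal.subset_span ⟨i, rfl⟩)
    have hker : RingHom.ker Φ = I ⊔ Ideal.span {(X Option.none : S)} := by
      apply le_antisymm
      · intro p hp
        rw [RingHom.mem_ker, hΦ_apply] at hp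
        have hevp : ev p ∈ Ideal.map (MvPolynomial.C :
            A →+* MvPolynomial (Fin (n + 1)) A) J := by
          have : ev p ∈ RingHom.ker (MvPolynomial.map (Ideal.Quotient.mk J) :
              MvPolynomial (Fin (n + 1)) A →+* MvPolynomial (Fin (n + 1)) (A ⧸ J)) := hp
          rwa [MvPolynomial.ker_map, Ideal.mk_ker] at this
        have hdecomp : p = rename Option.some (ev p) + (p - rename Option.some (ev p)) :=
          (add_sub_cancel _ _).symm
        rw [hdecomp]
        apply Ideal.add_mem
        · -- first piece lands in I ⊔ span {X none}
          have h1 : rename Option.some (ev p) ∈ Ideal.map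
              ((rename Option.some : MvPolynomial (Fin (n + 1)) A →ₐ[A] S) :
                MvPolynomial (Fin (n + 1)) A →+* S)
              (Ideal.map (MvPolynomial.C :
                A →+* MvPolynomial (Fin (n + 1)) A) J) := Ideal.mem_map_of_mem _ hevp
          rw [Ideal.map_map] at h1
          have hcomp : (((rename Option.some : MvPolynomial (Fin (n + 1)) A →ₐ[A] S) :
              MvPolynomial (Fin (n + 1)) A →+* S).comp (MvPolynomial.C :
                A →+* MvPolynomial (Fin (n + 1)) A)) = (MvPolynomial.C : A →+* S) := by
            refine RingHom.ext fun a => ?_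
            exact rename_C _ a
          rw [hcomp] at h1
          have hCJ : Ideal.map (MvPolynomial.C : A →+* S) J ≤
              I ⊔ Ideal.span {(X Option.none : S)} := by
            rw [hJ, Ideal.map_span, Ideal.span_le]
            rintro y ⟨x, ⟨i, rfl⟩, rfl⟩
            have : (MvPolynomial.C : A →+* S) (f i)
                = q i + X (Option.some i) * X Option.none ^ d i := by
              rw [hq]; ring
            rw [this]
            apply Ideal.add_mem
            · exact Ideal.mem_sup_left (by rw [hIq]; exact Ideal.subset_span ⟨i, rfl⟩)
            · apply Ideal.mem_sup_right
              rw [Ideal.mem_span_singleton]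
              exact Dvd.dvd.mul_left (dvd_pow_self _ (hd i).ne') _
          exact hCJ h1
        · apply Ideal.mem_sup_right
          rw [Ideal.mem_span_singleton]
          apply (ev_zero_iff _).mp
          rw [map_sub, hev_rename, sub_self]
      · rw [sup_le_iff]
        constructor
        · rw [hIq, Ideal.span_le]
          rintro y ⟨i, rfl⟩
          rw [SetLike.mem_coe, RingHom.mem_ker, hΦ_apply, hevq, map_C, hflift, C_0]
        · rw [Ideal.span_le, Set.singleton_subset_iff]
          rw [SetLike.mem_coe, RingHom.mem_ker, hΦ_apply, hev_none, map_zero]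
    have hmapspan : Ideal.span {Ideal.Quotient.mk I (X Option.none)}
        = Ideal.map (Ideal.Quotient.mk I) (Ideal.span {(X Option.none : S)}) := by
      rw [Ideal.map_span, Set.image_singleton]
    refine ⟨(((Ideal.quotEquivOfEq hmapspan).trans
        (DoubleQuot.quotQuotEquivQuotSup I (Ideal.span {(X Option.none : S)}))).trans
        (Ideal.quotEquivOfEq hker.symm)).trans
        (RingHom.quotientKerEquivOfSurjective hΦsurj), ?_, ?_⟩
    · intro a
      have : (((Ideal.quotEquivOfEq hmapspan).trans
          (DoubleQuot.quotQuotEquivQuotSup I (Ideal.span {(X Option.none : S)}))).trans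
          (Ideal.quotEquivOfEq hker.symm)).trans
          (RingHom.quotientKerEquivOfSurjective hΦsurj)
          (Ideal.Quotient.mk _ (Ideal.Quotient.mk I (C a))) = Φ (C a) := by
        simp only [RingEquiv.trans_apply, Ideal.quotEquivOfEq_mk]
        rw [show (Ideal.Quotient.mk (Ideal.map (Ideal.Quotient.mk I)
            (Ideal.span {(X Option.none : S)}))) (Ideal.Quotient.mk I (C a))
          = DoubleQuot.quotQuotMk I (Ideal.span {(X Option.none : S)}) (C a) from rfl]
        rw [DoubleQuot.quotQuotEquivQuotSup_quotQuotMk, Ideal.quotEquivOfEq_mk]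
        exact RingHom.kerLift_mk Φ _
      rw [this, hΦ_apply, hev_C, map_C]
    · intro i
      have : (((Ideal.quotEquivOfEq hmapspan).trans
          (DoubleQuot.quotQuotEquivQuotSup I (Ideal.span {(X Option.none : S)}))).trans
          (Ideal.quotEquivOfEq hker.symm)).trans
          (RingHom.quotientKerEquivOfSurjective hΦsurj)
          (Ideal.Quotient.mk _ (Ideal.Quotient.mk I (X (Option.some i)))) =
            Φ (X (Option.some i)) := by
        simp only [RingEquiv.trans_apply, Ideal.quotEquivOfEq_mk]
        rw [show (Ideal.Quotient.mk (Ideal.map (Ideal.Quotient.mk I)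
            (Ideal.span {(X Option.none : S)}))) (Ideal.Quotient.mk I (X (Option.some i)))
          = DoubleQuot.quotQuotMk I (Ideal.span {(X Option.none : S)}) (X (Option.some i))
            from rfl]
        rw [DoubleQuot.quotQuotEquivQuotSup_quotQuotMk, Ideal.quotEquivOfEq_mk]
        exact RingHom.kerLift_mk Φ _
      rw [this, hΦ_apply, hev_some, map_X]
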